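/- Let (M₁, M₂) and (N₁, N₂) be two-outcome POVMs on ℂ^d. Let φ ∈ ℂ^d be a unit eigenvector of the Hermitian matrix M₁ − N₁ whose eigenvalue λ₁ has the largest absolute value among all eigenvalues of M₁ − N₁, let D ≥ 1, and let ψ ∈ ℂ^D be any unit vector. Then for the product state ρ = (φφ†) ⊗ (ψψ†), the matrices T_μ = Tr_S[((M_μ − N_μ) ⊗ I_D) ρ] satisfy ‖T₁‖_* + ‖T₂‖_* = 2|λ₁|; that is, the upper bound on the stabilized distinguishability of the two POVM channels is achieved by a separable (product) input state. -/

import Mathlib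

open Matrix Kronecker
open scoped ComplexOrder

/-- The trace norm (nuclear norm) of a complex matrix: the trace of `√(Mᴴ M)`,
which equals the sum of the singular values of `M`. -/
noncomputable def traceNorm {n : Type*} [Fintype n] [DecidableEq n]
    (M : Matrix n n ℂ) : ℝ :=
  (((Matrix.posSemidef_conjTranspose_mul_self M).1.eigenvectorUnitary : Matrix n n ℂ) *
      diagonal (((↑) : ℝ → ℂ) ∘ Real.sqrt ∘ (Matrix.posSemidef_conjTranspose_mul_self M).1.eigenvalues) *
      star ((Matrix.posSemidef_conjTranspose_mul_self M).1.eigenvectorUnitary : Matrix n n ℂ)).trace.re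

/-- `partialTraceS X ρ = Tr_S[(X ⊗ I) ρ]`: the `D × D` matrix with entries
`(T)_{ab} = ∑ i j, X_{ji} ρ_{(i,a),(j,b)}`, the partial trace over the system factor. -/
noncomputable def partialTraceS {d D : ℕ} (X : Matrix (Fin d) (Fin d) ℂ)
    (ρ : Matrix (Fin d × Fin D) (Fin d × Fin D) ℂ) : Matrix (Fin D) (Fin D) ℂ :=
  Matrix.of fun a b => ∑ i, ∑ j, X j i * ρ (i, a) (j, b)

lemma traceNorm_smul_proj {D : ℕ} (c : ℝ) (ψ : Fin D → ℂ) (hψ : star ψ ⬝ᵥ ψ = 1) :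
    traceNorm ((c : ℂ) • Matrix.vecMulVec ψ (star ψ)) = |c| := by
  set P : Matrix (Fin D) (Fin D) ℂ := Matrix.vecMulVec ψ (star ψ) with hP
  have hsum : ∑ k, (starRingEnd ℂ) (ψ k) * ψ k = 1 := by
    simpa [dotProduct, Pi.star_apply] using hψ
  have hPP : P * P = P := by
    ext i j
    simp only [hP, Matrix.mul_apply, Matrix.vecMulVec_apply, Pi.star_apply]
    calc ∑ k, ψ i * (starRingEnd ℂ) (ψ k) * (ψ k * (starRingEnd ℂ) (ψ j))
        = (∑ k, (starRingEnd ℂ) (ψ k) * ψ k) * (ψ i * (starRingEnd ℂ) (ψ j)) := by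
          rw [Finset.sum_mul]; congr 1; ext k; ring
      _ = ψ i * (starRingEnd ℂ) (ψ j) := by rw [hsum, one_mul]
  have hPherm : Pᴴ = P := by
    ext i j
    simp [hP, Matrix.conjTranspose_apply, Matrix.vecMulVec_apply, mul_comm]
  have hApsd : (((|c| : ℝ) : ℂ) • P).PosSemidef := by
    have : ((|c| : ℝ) : ℂ) • P =
        (((Real.sqrt |c| : ℝ) : ℂ) • Matrix.of fun (_ : Fin 1) j => (starRingEnd ℂ) (ψ j))ᴴ *
        (((Real.sqrt |c| : ℝ) : ℂ) • Matrix.of fun (_ : Fin 1) j => (starRingEnd ℂ) (ψ j)) := by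
      ext i j
      simp only [Matrix.mul_apply, Matrix.conjTranspose_apply, Matrix.smul_apply,
        Matrix.of_apply, star_mul', RCLike.star_def, Complex.conj_ofReal,
        RingHomCompTriple.comp_apply, RingHom.id_apply, Matrix.vecMulVec_apply, Pi.star_apply,
        smul_eq_mul, hP]
      rw [Fin.sum_univ_one]
      have hs : ((Real.sqrt |c| : ℝ) : ℂ) * ((Real.sqrt |c| : ℝ) : ℂ) = ((|c| : ℝ) : ℂ) := by
        rw [← Complex.ofReal_mul, Real.mul_self_sqrt (abs_nonneg c)]
      linear_combination -(ψ i * (starRingEnd ℂ) (ψ j)) * hs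
    rw [this]
    exact Matrix.posSemidef_conjTranspose_mul_self _
  have hsq : (((|c| : ℝ) : ℂ) • P) ^ 2 = ((c : ℂ) • P)ᴴ * ((c : ℂ) • P) := by
    rw [pow_two, Matrix.conjTranspose_smul, hPherm]
    rw [Matrix.smul_mul, Matrix.mul_smul, Matrix.smul_mul, Matrix.mul_smul, hPP]
    rw [smul_smul, smul_smul]
    congr 1
    simp only [RCLike.star_def, Complex.conj_ofReal]
    norm_cast
    rw [abs_mul_abs_self]
  have heq : (Matrix.posSemidef_conjTranspose_mul_self ((c : ℂ) • P)).1.cfc Real.sqrt =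
      ((|c| : ℝ) : ℂ) • P := by
    open scoped MatrixOrder in
    rw [← Matrix.IsHermitian.cfc_eq, ← cfcₙ_eq_cfc (hf0 := Real.sqrt_zero),
      ← CFC.sqrt_eq_real_sqrt _
      (Matrix.posSemidef_conjTranspose_mul_self ((c : ℂ) • P)).nonneg, ← hsq,
      CFC.sqrt_sq _ hApsd.nonneg]
  have htr : P.trace = 1 := by
    rw [Matrix.trace]
    simp only [Matrix.diag, Matrix.vecMulVec_apply, hP, Pi.star_apply]
    rw [← hsum]; congr 1; ext k; simp [RCLike.star_def]; ring
  rw [traceNorm]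
  change ((Matrix.posSemidef_conjTranspose_mul_self ((c : ℂ) • P)).1.cfc Real.sqrt).trace.re = _
  rw [heq, Matrix.trace_smul, htr, smul_eq_mul, mul_one, Complex.ofReal_re]


lemma partialTraceS_product {d D : ℕ} (X : Matrix (Fin d) (Fin d) ℂ)
    (φ : Fin d → ℂ) (hφ : star φ ⬝ᵥ φ = 1) (c : ℝ) (hXφ : X *ᵥ φ = (c : ℂ) • φ)
    (ψ : Fin D → ℂ) :
    partialTraceS X (Matrix.vecMulVec φ (star φ) ⊗ₖ Matrix.vecMulVec ψ (star ψ)) =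
      (c : ℂ) • Matrix.vecMulVec ψ (star ψ) := by
  have key : ∑ i, ∑ j, X j i * (φ i * (starRingEnd ℂ) (φ j)) = (c : ℂ) := by
    rw [Finset.sum_comm]
    have : ∀ j, ∑ i, X j i * (φ i * (starRingEnd ℂ) (φ j)) =
        (starRingEnd ℂ) (φ j) * (X *ᵥ φ) j := by
      intro j
      rw [Matrix.mulVec, dotProduct, Finset.mul_sum]
      congr 1; ext i; ring
    rw [Finset.sum_congr rfl fun j _ => this j, hXφ]
    have : ∑ j, (starRingEnd ℂ) (φ j) * ((c : ℂ) • φ) j =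
        (c : ℂ) * ∑ j, (starRingEnd ℂ) (φ j) * φ j := by
      rw [Finset.mul_sum]; congr 1; ext j; simp [Pi.smul_apply]; ring
    rw [this]
    have hφ' : ∑ j, (starRingEnd ℂ) (φ j) * φ j = 1 := by
      simpa [dotProduct, Pi.star_apply] using hφ
    rw [hφ', mul_one]
  ext a b
  simp only [partialTraceS, Matrix.of_apply, Matrix.kroneckerMap_apply,
    Matrix.vecMulVec_apply, Pi.star_apply, Matrix.smul_apply, smul_eq_mul]
  calc ∑ i, ∑ j, X j i * (φ i * (starRingEnd ℂ) (φ j) * (ψ a * (starRingEnd ℂ) (ψ b)))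
      = (∑ i, ∑ j, X j i * (φ i * (starRingEnd ℂ) (φ j))) * (ψ a * (starRingEnd ℂ) (ψ b)) := by
        rw [Finset.sum_mul]; congr 1; ext i; rw [Finset.sum_mul]; congr 1; ext j; ring
    _ = (c : ℂ) * (ψ a * (starRingEnd ℂ) (ψ b)) := by rw [key]

/-- For two-outcome POVMs `(M₁, M₂)` and `(N₁, N₂)` on `ℂ^d`, if `φ` is a unit eigenvector of
the Hermitian matrix `M₁ − N₁` whose eigenvalue `λ₁` has the largest absolute value among
all eigenvalues, and `ψ ∈ ℂ^D` is any unit vector, then the product state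
`ρ = (φφ†) ⊗ (ψψ†)` achieves `‖T₁‖_* + ‖T₂‖_* = 2|λ₁|` for the blocks
`T_μ = Tr_S[((M_μ − N_μ) ⊗ I) ρ]`: the bound on the stabilized distinguishability is
achieved by a separable input state. -/
theorem traceNorm_partialTrace_add_eq_of_product_eigvec {d D : ℕ} (hD : 1 ≤ D)
    (M₁ M₂ N₁ N₂ : Matrix (Fin d) (Fin d) ℂ)
    (hM₁ : M₁.PosSemidef) (hM₂ : M₂.PosSemidef) (hMsum : M₁ + M₂ = 1)
    (hN₁ : N₁.PosSemidef) (hN₂ : N₂.PosSemidef) (hNsum : N₁ + N₂ = 1)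
    (φ : Fin d → ℂ) (hφ : star φ ⬝ᵥ φ = 1)
    (lam₁ : ℝ) (hEig : (M₁ - N₁) *ᵥ φ = (lam₁ : ℂ) • φ)
    (hMax : ∀ k, |(hM₁.1.sub hN₁.1).eigenvalues k| ≤ |lam₁|)
    (ψ : Fin D → ℂ) (hψ : star ψ ⬝ᵥ ψ = 1)
    (ρ : Matrix (Fin d × Fin D) (Fin d × Fin D) ℂ)
    (hρ : ρ = Matrix.vecMulVec φ (star φ) ⊗ₖ Matrix.vecMulVec ψ (star ψ)) :
    traceNorm (partialTraceS (M₁ - N₁) ρ) + traceNorm (partialTraceS (M₂ - N₂) ρ) =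
      2 * |lam₁| := by
  have hM2 : M₂ = 1 - M₁ := by rw [← hMsum]; abel
  have hN2 : N₂ = 1 - N₁ := by rw [← hNsum]; abel
  have hMN : M₂ - N₂ = -(M₁ - N₁) := by rw [hM2, hN2]; abel
  have hEig2 : (M₂ - N₂) *ᵥ φ = ((-lam₁ : ℝ) : ℂ) • φ := by
    rw [hMN, Matrix.neg_mulVec, hEig]
    push_cast
    rw [neg_smul]
  rw [hρ, partialTraceS_product (M₁ - N₁) φ hφ lam₁ hEig ψ,
    partialTraceS_product (M₂ - N₂) φ hφ (-lam₁) hEig2 ψ,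
    traceNorm_smul_proj lam₁ ψ hψ, traceNorm_smul_proj (-lam₁) ψ hψ, abs_neg]
  ring
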